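/- For a wedge of angle α removed from space and then boosted by a boost of Lorentz factor γ perpendicular to the wedge's leading edge and directed along the wedge's bisector, the effective opening angle α' of the boosted wedge in the plane orthogonal to the defect satisfies tan(α'/2) = γ tan(α/2). -/

import Mathlib

open Real

/-- The Minkowski inner product in 3+1 dimensions with signature `(−+++)`. -/
noncomputable def mdot (x y : Fin 4 → ℝ) : ℝ :=
  -(x 0 * y 0) + x 1 * y 1 + x 2 * y 2 + x 3 * y 3

/-- A wedge of angle `α` (with sides along the unit spacelike vectors
`e₁, e₂`, symmetric about the `x`-axis, orthogonal to `v₀ = (1,0,0,0)` and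
`d₀ = (0,0,0,1)`), boosted by the boost `B` with velocity `w` along the bisector
(`x`-direction) of Lorentz factor `γ = (1−w²)^{−1/2}`, has effective opening
angle `α'` in the plane orthogonal to the defect — defined through
`cos(α'/2) = eb'ᵢ · η / |η|` with `eb'ᵢ = (e'ᵢ − (eᵢ·η) v'₀)/√(1−(eᵢ·η)²)`,
`e'ᵢ = B eᵢ`, `v'₀ = B v₀` — satisfying `tan(α'/2) = γ tan(α/2)`. -/
theorem boosted_wedge_angle (α α' w γ : ℝ)
    (hα : α ∈ Set.Ioo 0 π) (hα' : α' ∈ Set.Ioo 0 π)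
    (hw : w ∈ Set.Ioo (0:ℝ) 1)
    (hγ : γ = 1 / Real.sqrt (1 - w^2))
    (v₀ d₀ e₁ e₂ η : Fin 4 → ℝ)
    (hv₀ : v₀ = ![1, 0, 0, 0]) (hd₀ : d₀ = ![0, 0, 0, 1])
    (he₁ : e₁ = ![0, Real.cos (α/2), Real.sin (α/2), 0])
    (he₂ : e₂ = ![0, Real.cos (α/2), -Real.sin (α/2), 0])
    (hη : η = ![0, w, 0, 0])
    (B : (Fin 4 → ℝ) → (Fin 4 → ℝ))
    (hB : ∀ x, B x = ![γ * (x 0 + w * x 1), γ * (x 1 + w * x 0), x 2, x 3])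
    (v₀' e₁' e₂' eb₁ eb₂ : Fin 4 → ℝ)
    (hv₀' : v₀' = B v₀) (he₁' : e₁' = B e₁) (he₂' : e₂' = B e₂)
    (heb₁ : eb₁ = fun i =>
      (e₁' i - mdot e₁ η * v₀' i) / Real.sqrt (1 - (mdot e₁ η)^2))
    (heb₂ : eb₂ = fun i =>
      (e₂' i - mdot e₂ η * v₀' i) / Real.sqrt (1 - (mdot e₂ η)^2))
    (hcos : Real.cos (α'/2) = mdot eb₁ η / w) :
    Real.tan (α'/2) = γ * Real.tan (α/2) := by
  obtain ⟨hα0, hαπ⟩ := hα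
  obtain ⟨hα'0, hα'π⟩ := hα'
  obtain ⟨hw0, hw1⟩ := hw
  set c := Real.cos (α/2) with hcdef
  set s := Real.sin (α/2) with hsdef
  have hc : 0 < c := Real.cos_pos_of_mem_Ioo ⟨by linarith [Real.pi_pos], by linarith⟩
  have hs : 0 < s := Real.sin_pos_of_pos_of_lt_pi (by linarith) (by linarith [Real.pi_pos])
  have hc1 : c ≤ 1 := Real.cos_le_one _
  have hcs : c^2 + s^2 = 1 := by
    rw [hcdef, hsdef]; exact Real.cos_sq_add_sin_sq _
  have hw2 : 0 < 1 - w^2 := by nlinarith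
  have hD2 : 0 < 1 - (c*w)^2 := by nlinarith
  have ht : 0 < Real.sqrt (1 - w^2) := Real.sqrt_pos.mpr hw2
  have hD : 0 < Real.sqrt (1 - (c*w)^2) := Real.sqrt_pos.mpr hD2
  have hm : mdot e₁ η = c * w := by
    simp [mdot, he₁, hη]
  have hγpos : 0 < γ := by rw [hγ]; positivity
  -- explicit form of cos(α'/2)
  have hcos' : Real.cos (α'/2) = Real.sqrt (1 - w^2) * c / Real.sqrt (1 - (c*w)^2) := by
    rw [hcos, heb₁]
    simp only [mdot, hη, he₁', hv₀', hB, he₁, hv₀, hm]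
    simp [Matrix.cons_val_zero, Matrix.cons_val_one, Matrix.head_cons]
    have hγ2 : γ * (1 - w^2) = Real.sqrt (1 - w^2) := by
      rw [hγ]; field_simp; rw [Real.sq_sqrt hw2.le]
    rw [show γ * c - c * w * (γ * w) = c * (γ * (1 - w^2)) by ring, hγ2]
    field_simp
  have hsin : Real.sin (α'/2) = s / Real.sqrt (1 - (c*w)^2) := by
    have h1 : Real.sin (α'/2) = Real.sqrt (1 - Real.cos (α'/2)^2) :=
      Real.sin_eq_sqrt_one_sub_cos_sq (by linarith) (by linarith)
    rw [h1, hcos']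
    have h2 : 1 - (Real.sqrt (1 - w^2) * c / Real.sqrt (1 - (c*w)^2))^2
        = s^2 / (1 - (c*w)^2) := by
      rw [div_pow, mul_pow, Real.sq_sqrt hw2.le, Real.sq_sqrt hD2.le]
      have hne : 1 - w^2*c^2 ≠ 0 := by nlinarith
      field_simp
      nlinarith [hcs]
    rw [h2, Real.sqrt_div (by positivity), Real.sqrt_sq hs.le]
  rw [Real.tan_eq_sin_div_cos, hsin, hcos', Real.tan_eq_sin_div_cos, ← hsdef, ← hcdef, hγ]
  field_simp
  rw [div_self]; rw [← mul_pow]; exact hD.ne'
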